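/- Let F be Thompson's group, presented as the presented group on two generators x₀, x₁ with relators x₁⁻¹x₂x₁x₃⁻¹ and x₁⁻¹x₃x₁x₄⁻¹, where xₙ := x₀^{-(n-1)} x₁ x₀^{n-1}, and set h := x₁x₂x₁⁻² with x₂ = x₀⁻¹x₁x₀. Then for all integers i and j, the elements x₀⁻ⁱ h x₀ⁱ and x₀⁻ʲ h x₀ʲ commute in F. -/

import Mathlib

/-- The elements `xₙ` of the free group on two generators:
`x₀`, and `xₙ = x₀^{-(n-1)} x₁ x₀^{n-1}` for `n ≥ 1`. -/
def xgen : ℕ → FreeGroup (Fin 2)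
  | 0 => FreeGroup.of 0
  | n + 1 => (FreeGroup.of 0) ^ (-(n : ℤ)) * FreeGroup.of 1 * (FreeGroup.of 0) ^ (n : ℤ)

/-- The two defining relators of Thompson's group `F`. -/
def thompsonRels : Set (FreeGroup (Fin 2)) :=
  {(xgen 1)⁻¹ * xgen 2 * xgen 1 * (xgen 3)⁻¹,
   (xgen 1)⁻¹ * xgen 3 * xgen 1 * (xgen 4)⁻¹}

/-- Thompson's group `F` as a presented group. -/
abbrev ThompsonF := PresentedGroup thompsonRels

/-- The generator `x₀` of Thompson's group `F`. -/
def xF₀ : ThompsonF := PresentedGroup.of 0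

/-- The generator `x₁` of Thompson's group `F`. -/
def xF₁ : ThompsonF := PresentedGroup.of 1

/-- The element `h = x₁ x₂ x₁⁻²` of Thompson's group `F`, where `x₂ = x₀⁻¹x₁x₀`. -/
def hF : ThompsonF := xF₁ * (xF₀⁻¹ * xF₁ * xF₀) * xF₁⁻¹ * xF₁⁻¹

namespace ThompsonAux

/-- `a n = x₀^{-n} x₁ x₀^n` (so `a n` is `x_{n+1}` in the usual numbering). -/
def a (n : ℤ) : ThompsonF := xF₀ ^ (-n) * xF₁ * xF₀ ^ n

lemma mk_rel {r : FreeGroup (Fin 2)} (hr : r ∈ thompsonRels) :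
    PresentedGroup.mk thompsonRels r = 1 :=
  (QuotientGroup.eq_one_iff r).2 (Subgroup.subset_normalClosure hr)

lemma rel_a1 : (a 0)⁻¹ * a 1 * a 0 = a 2 := by
  have h1 : PresentedGroup.mk thompsonRels ((xgen 1)⁻¹ * xgen 2 * xgen 1 * (xgen 3)⁻¹) = 1 :=
    mk_rel (Set.mem_insert _ _)
  simp only [xgen, map_mul, map_inv, map_zpow] at h1
  have h1' : (a 0)⁻¹ * a 1 * a 0 * (a 2)⁻¹ = 1 := by
    simp only [a]
    exact_mod_cast h1
  calc (a 0)⁻¹ * a 1 * a 0 = ((a 0)⁻¹ * a 1 * a 0 * (a 2)⁻¹) * a 2 := by group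
    _ = a 2 := by rw [h1']; group

lemma rel_a2 : (a 0)⁻¹ * a 2 * a 0 = a 3 := by
  have h1 : PresentedGroup.mk thompsonRels ((xgen 1)⁻¹ * xgen 3 * xgen 1 * (xgen 4)⁻¹) = 1 :=
    mk_rel (Set.mem_insert_of_mem _ rfl)
  simp only [xgen, map_mul, map_inv, map_zpow] at h1
  have h1' : (a 0)⁻¹ * a 2 * a 0 * (a 3)⁻¹ = 1 := by
    simp only [a]
    exact_mod_cast h1
  calc (a 0)⁻¹ * a 2 * a 0 = ((a 0)⁻¹ * a 2 * a 0 * (a 3)⁻¹) * a 3 := by group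
    _ = a 3 := by rw [h1']; group

lemma rel_step (k : ℤ) : (a k)⁻¹ * a (k + 1) * a k = a (k + 2) := by
  have h : xF₀ ^ (-k) * ((a 0)⁻¹ * a 1 * a 0) * xF₀ ^ k
      = xF₀ ^ (-k) * a 2 * xF₀ ^ k := by rw [rel_a1]
  simp only [a] at h ⊢
  calc (xF₀ ^ (-k) * xF₁ * xF₀ ^ k)⁻¹ * (xF₀ ^ (-(k+1)) * xF₁ * xF₀ ^ (k+1)) *
        (xF₀ ^ (-k) * xF₁ * xF₀ ^ k)
      = xF₀ ^ (-k) * ((xF₀ ^ (-(0:ℤ)) * xF₁ * xF₀ ^ (0:ℤ))⁻¹ *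
          (xF₀ ^ (-(1:ℤ)) * xF₁ * xF₀ ^ (1:ℤ)) *
          (xF₀ ^ (-(0:ℤ)) * xF₁ * xF₀ ^ (0:ℤ))) * xF₀ ^ k := by group
    _ = xF₀ ^ (-k) * (xF₀ ^ (-(2:ℤ)) * xF₁ * xF₀ ^ (2:ℤ)) * xF₀ ^ k := h
    _ = xF₀ ^ (-(k+2)) * xF₁ * xF₀ ^ (k+2) := by group

lemma rel_step2 (k : ℤ) : (a k)⁻¹ * a (k + 2) * a k = a (k + 3) := by
  have h : xF₀ ^ (-k) * ((a 0)⁻¹ * a 2 * a 0) * xF₀ ^ k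
      = xF₀ ^ (-k) * a 3 * xF₀ ^ k := by rw [rel_a2]
  simp only [a] at h ⊢
  calc (xF₀ ^ (-k) * xF₁ * xF₀ ^ k)⁻¹ * (xF₀ ^ (-(k+2)) * xF₁ * xF₀ ^ (k+2)) *
        (xF₀ ^ (-k) * xF₁ * xF₀ ^ k)
      = xF₀ ^ (-k) * ((xF₀ ^ (-(0:ℤ)) * xF₁ * xF₀ ^ (0:ℤ))⁻¹ *
          (xF₀ ^ (-(2:ℤ)) * xF₁ * xF₀ ^ (2:ℤ)) *
          (xF₀ ^ (-(0:ℤ)) * xF₁ * xF₀ ^ (0:ℤ))) * xF₀ ^ k := by group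
    _ = xF₀ ^ (-k) * (xF₀ ^ (-(3:ℤ)) * xF₁ * xF₀ ^ (3:ℤ)) * xF₀ ^ k := h
    _ = xF₀ ^ (-(k+3)) * xF₁ * xF₀ ^ (k+3) := by group

lemma rel_gen : ∀ (d : ℕ) (k : ℤ), (a k)⁻¹ * a (k + 1 + d) * a k = a (k + 2 + d) := by
  intro d
  induction d using Nat.strong_induction_on with
  | _ d ih =>
    match d with
    | 0 => intro k; simpa using rel_step k
    | 1 =>
      intro k
      have := rel_step2 k
      rw [show (k : ℤ) + 1 + (1:ℕ) = k + 2 by push_cast; ring,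
          show (k : ℤ) + 2 + (1:ℕ) = k + 3 by push_cast; ring]
      exact this
    | (d + 2) =>
      intro k
      have e1 : a (k + 1 + (d + 2 : ℕ)) = (a (k + 1 + d))⁻¹ * a (k + 2 + d) * a (k + 1 + d) := by
        have := rel_step (k + 1 + d)
        rw [show (k : ℤ) + 1 + d + 1 = k + 2 + d by ring,
            show (k : ℤ) + 1 + d + 2 = k + 1 + (d + 2 : ℕ) by push_cast; ring] at this
        exact this.symm
      have i1 := ih d (by omega) k
      have i2 := ih (d + 1) (by omega) k
      rw [show (k : ℤ) + 1 + (d + 1 : ℕ) = k + 2 + d by push_cast; ring,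
          show (k : ℤ) + 2 + (d + 1 : ℕ) = k + 3 + d by push_cast; ring] at i2
      have e2 := rel_step (k + 2 + d)
      rw [show (k : ℤ) + 2 + d + 1 = k + 3 + d by ring,
          show (k : ℤ) + 2 + d + 2 = k + 2 + (d + 2 : ℕ) by push_cast; ring] at e2
      calc (a k)⁻¹ * a (k + 1 + (d + 2 : ℕ)) * a k
          = (a k)⁻¹ * ((a (k + 1 + d))⁻¹ * a (k + 2 + d) * a (k + 1 + d)) * a k := by rw [e1]
        _ = ((a k)⁻¹ * a (k + 1 + d) * a k)⁻¹ * ((a k)⁻¹ * a (k + 2 + d) * a k) *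
              ((a k)⁻¹ * a (k + 1 + d) * a k) := by group
        _ = (a (k + 2 + d))⁻¹ * a (k + 3 + d) * a (k + 2 + d) := by rw [i1, i2]
        _ = a (k + 2 + (d + 2 : ℕ)) := e2

lemma conj_rel {k n : ℤ} (h : k < n) : (a k)⁻¹ * a n * a k = a (n + 1) := by
  have := rel_gen (n - k - 1).toNat k
  rw [show (k : ℤ) + 1 + (n - k - 1).toNat = n by omega,
      show (k : ℤ) + 2 + (n - k - 1).toNat = n + 1 by omega] at this
  exact this

lemma conj_rel' {k n : ℤ} (h : k < n) : a k * a (n + 1) * (a k)⁻¹ = a n := by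
  rw [← conj_rel h]; group

/-- `b k = x₀^{-k} h x₀^k`. -/
def b (k : ℤ) : ThompsonF := a k * a (k + 1) * (a k)⁻¹ * (a k)⁻¹

lemma comm_b_a {k n : ℤ} (h : k < n) : Commute (b k) (a n) := by
  have s1 : (a k)⁻¹ * a n * a k = a (n + 1) := conj_rel h
  have s2 : (a (k + 1))⁻¹ * a (n + 1) * a (k + 1) = a (n + 1 + 1) := conj_rel (by omega)
  have s3 : a k * a (n + 1 + 1) * (a k)⁻¹ = a (n + 1) := conj_rel' (by omega)
  have s4 : a k * a (n + 1) * (a k)⁻¹ = a n := conj_rel' h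
  have key : (b k)⁻¹ * a n * b k = a n := by
    simp only [b]
    calc (a k * a (k + 1) * (a k)⁻¹ * (a k)⁻¹)⁻¹ * a n * (a k * a (k + 1) * (a k)⁻¹ * (a k)⁻¹)
        = a k * (a k * ((a (k + 1))⁻¹ * ((a k)⁻¹ * a n * a k) * a (k + 1)) * (a k)⁻¹) *
            (a k)⁻¹ := by group; rw [zpow_two]
      _ = a k * (a k * ((a (k + 1))⁻¹ * a (n + 1) * a (k + 1)) * (a k)⁻¹) * (a k)⁻¹ := by rw [s1]
      _ = a k * (a k * a (n + 1 + 1) * (a k)⁻¹) * (a k)⁻¹ := by rw [s2]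
      _ = a k * a (n + 1) * (a k)⁻¹ := by rw [s3]
      _ = a n := s4
  have : a n * b k = b k * a n := by
    calc a n * b k = b k * ((b k)⁻¹ * a n * b k) := by group
      _ = b k * a n := by rw [key]
  exact this.symm

lemma comm_b_b {k m : ℤ} (h : k < m) : Commute (b k) (b m) := by
  have h1 : Commute (b k) (a m) := comm_b_a h
  have h2 : Commute (b k) (a (m + 1)) := comm_b_a (by omega)
  exact ((h1.mul_right h2).mul_right h1.inv_right).mul_right h1.inv_right

lemma comm_b (k m : ℤ) : Commute (b k) (b m) := by
  rcases lt_trichotomy k m with h | h | h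
  · exact comm_b_b h
  · rw [h]
  · exact (comm_b_b h).symm

lemma conj_hF (i : ℤ) : xF₀ ^ (-i) * hF * xF₀ ^ i = b i := by
  simp only [hF, b, a]
  group

end ThompsonAux

theorem thompson_conjugates_of_h_commute (i j : ℤ) :
    Commute (xF₀ ^ (-i) * hF * xF₀ ^ i) (xF₀ ^ (-j) * hF * xF₀ ^ j) := by
  rw [ThompsonAux.conj_hF i, ThompsonAux.conj_hF j]
  exact ThompsonAux.comm_b i j
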